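/- Let E be a 3-dimensional real inner product space and R an algebraic curvature tensor on E. If for every unit vector v ∈ E there exists a nonzero vector w orthogonal to v with R(w,v)v = 0, then R has signed sectional curvatures: either R(x,y,y,x) ≥ 0 for all orthonormal x, y ∈ E, or R(x,y,y,x) ≤ 0 for all orthonormal x, y ∈ E. (This is the pointwise content of the statement that a 3-manifold with higher rank has pointwise signed sectional curvatures.) -/

import Mathlib

open scoped RealInnerProductSpace

/-- An algebraic curvature tensor on a real inner product space `E`: a multilinear map
`R : E × E × E × E → ℝ` with the symmetries of the Riemann curvature tensor.
For vectors `x y z`, the value `R x y z ·` represents the linear functional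
`w ↦ ⟨R(x,y)z, w⟩` determined by the curvature operator `R(x,y)z`. -/
structure AlgCurvTensor (E : Type*) [NormedAddCommGroup E] [InnerProductSpace ℝ E] where
  R : E →ₗ[ℝ] E →ₗ[ℝ] E →ₗ[ℝ] E →ₗ[ℝ] ℝ
  antisym_fst : ∀ x y z w : E, R x y z w = - R y x z w
  antisym_snd : ∀ x y z w : E, R x y z w = - R x y w z
  pair_symm : ∀ x y z w : E, R x y z w = R z w x y
  bianchi : ∀ x y z w : E, R x y z w + R y z x w + R z x y w = 0

/-- The Levi-Civita symbol on `Fin 3`, valued in `ℝ`. -/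
def lev : Fin 3 → Fin 3 → Fin 3 → ℝ :=
  ![![![0,0,0],![0,0,1],![0,-1,0]],
    ![![0,0,-1],![0,0,0],![1,0,0]],
    ![![0,1,0],![-1,0,0],![0,0,0]]]

lemma fin3cases (t : Fin 3) : t = 0 ∨ t = 1 ∨ t = 2 := by revert t; decide

/-- Levi-Civita normal form of a tensor with the two antisymmetries. -/
lemma master (r : Fin 3 → Fin 3 → Fin 3 → Fin 3 → ℝ)
    (hA : ∀ i j k l, r i j k l = - r j i k l)
    (hB : ∀ i j k l, r i j k l = - r i j l k)
    (i j k l : Fin 3) :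
    r i j k l = ∑ a : Fin 3, ∑ c : Fin 3,
      lev i j a * lev k l c * r (a+1) (a+2) (c+1) (c+2) := by
  have e1 := hA i j k l
  have e2 := hB i j k l
  have e3 := hB j i k l
  rcases fin3cases i with rfl|rfl|rfl <;> rcases fin3cases j with rfl|rfl|rfl <;>
    rcases fin3cases k with rfl|rfl|rfl <;> rcases fin3cases l with rfl|rfl|rfl <;>
    simp only [lev, Fin.sum_univ_three, Fin.reduceAdd, Matrix.cons_val_zero,
      Matrix.cons_val_one, Matrix.head_cons, Matrix.cons_val_two, Matrix.tail_cons,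
      zero_mul, mul_zero, one_mul, neg_mul, neg_neg, add_zero, zero_add, mul_neg] <;>
    linarith

lemma innerSum {E : Type*} [NormedAddCommGroup E] [InnerProductSpace ℝ E]
    [FiniteDimensional ℝ E] (b : OrthonormalBasis (Fin 3) ℝ E) (v w : E) :
    ⟪v, w⟫ = ∑ i : Fin 3, b.repr v i * b.repr w i := by
  rw [← OrthonormalBasis.sum_inner_mul_inner b v w]
  refine Finset.sum_congr rfl fun i _ => ?_
  rw [b.repr_apply_apply v, b.repr_apply_apply w, real_inner_comm]

lemma expand4 {E : Type*} [NormedAddCommGroup E] [InnerProductSpace ℝ E]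
    [FiniteDimensional ℝ E] (T : AlgCurvTensor E) (b : OrthonormalBasis (Fin 3) ℝ E)
    (x y z w : E) :
    T.R x y z w = ∑ l : Fin 3, b.repr w l * ∑ k : Fin 3, b.repr z k *
      ∑ j : Fin 3, b.repr y j * ∑ i : Fin 3, b.repr x i *
        T.R (b i) (b j) (b k) (b l) := by
  conv_lhs => rw [← b.sum_repr x, ← b.sum_repr y, ← b.sum_repr z, ← b.sum_repr w]
  simp only [map_sum, map_smul, LinearMap.sum_apply, LinearMap.smul_apply, smul_eq_mul]
set_option maxHeartbeats 4000000 in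
lemma stepA (q00 q01 q02 q11 q12 q22 m0 m1 m2 n0 n1 n2 : ℝ)
    (hn : n0^2 + n1^2 + n2^2 = 1)
    (hm : m0 ≠ 0 ∨ m1 ≠ 0 ∨ m2 ≠ 0)
    (hmn : n0 * m0 + n1 * m1 + n2 * m2 = 0)
    (E0 : m0 * (-n1 * n1 * q22 + n1 * n2 * q12 + n2 * n1 * q12 - n2 * n2 * q11) + m1 * (n0 * n1 * q22 - n0 * n2 * q12 - n2 * n1 * q02 + n2 * n2 * q01) + m2 * (-n0 * n1 * q12 + n0 * n2 * q11 + n1 * n1 * q02 - n1 * n2 * q01) = 0)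
    (E1 : m0 * (n1 * n0 * q22 - n1 * n2 * q02 - n2 * n0 * q12 + n2 * n2 * q01) + m1 * (-n0 * n0 * q22 + n0 * n2 * q02 + n2 * n0 * q02 - n2 * n2 * q00) + m2 * (n0 * n0 * q12 - n0 * n2 * q01 - n1 * n0 * q02 + n1 * n2 * q00) = 0)
    (E2 : m0 * (-n1 * n0 * q12 + n1 * n1 * q02 + n2 * n0 * q11 - n2 * n1 * q01) + m1 * (n0 * n0 * q12 - n0 * n1 * q02 - n2 * n0 * q01 + n2 * n1 * q00) + m2 * (-n0 * n0 * q11 + n0 * n1 * q01 + n1 * n0 * q01 - n1 * n1 * q00) = 0) :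
    ((q11*q22 - q12^2) * n0^2 + (q00*q22 - q02^2) * n1^2 + (q00*q11 - q01^2) * n2^2 + 2*(q02*q12 - q01*q22) * n0*n1 + 2*(q01*q12 - q02*q11) * n0*n2 + 2*(q01*q02 - q00*q12) * n1*n2) = 0 := by
  have hmm : (0:ℝ) < m0^2 + m1^2 + m2^2 := by
    rcases hm with h|h|h <;> nlinarith [mul_self_pos.mpr h, sq_nonneg m0, sq_nonneg m1, sq_nonneg m2]
  have G0 : n0 * (-n1 * n1 * q22 + n1 * n2 * q12 + n2 * n1 * q12 - n2 * n2 * q11) + n1 * (n0 * n1 * q22 - n0 * n2 * q12 - n2 * n1 * q02 + n2 * n2 * q01) + n2 * (-n0 * n1 * q12 + n0 * n2 * q11 + n1 * n1 * q02 - n1 * n2 * q01) = 0 := by ring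
  have G1 : n0 * (n1 * n0 * q22 - n1 * n2 * q02 - n2 * n0 * q12 + n2 * n2 * q01) + n1 * (-n0 * n0 * q22 + n0 * n2 * q02 + n2 * n0 * q02 - n2 * n2 * q00) + n2 * (n0 * n0 * q12 - n0 * n2 * q01 - n1 * n0 * q02 + n1 * n2 * q00) = 0 := by ring
  have G2 : n0 * (-n1 * n0 * q12 + n1 * n1 * q02 + n2 * n0 * q11 - n2 * n1 * q01) + n1 * (n0 * n0 * q12 - n0 * n1 * q02 - n2 * n0 * q01 + n2 * n1 * q00) + n2 * (-n0 * n0 * q11 + n0 * n1 * q01 + n1 * n0 * q01 - n1 * n1 * q00) = 0 := by ring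
  have X00 : (n0 * n1 * q22 - n0 * n2 * q12 - n2 * n1 * q02 + n2 * n2 * q01) * (m0 * n1 - m1 * n0) - (-n0 * n1 * q12 + n0 * n2 * q11 + n1 * n1 * q02 - n1 * n2 * q01) * (m2 * n0 - m0 * n2) = 0 := by
    linear_combination (m0) * G0 - (n0) * E0
  have X01 : (-n0 * n1 * q12 + n0 * n2 * q11 + n1 * n1 * q02 - n1 * n2 * q01) * (m1 * n2 - m2 * n1) - (-n1 * n1 * q22 + n1 * n2 * q12 + n2 * n1 * q12 - n2 * n2 * q11) * (m0 * n1 - m1 * n0) = 0 := by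
    linear_combination (m1) * G0 - (n1) * E0
  have X02 : (-n1 * n1 * q22 + n1 * n2 * q12 + n2 * n1 * q12 - n2 * n2 * q11) * (m2 * n0 - m0 * n2) - (n0 * n1 * q22 - n0 * n2 * q12 - n2 * n1 * q02 + n2 * n2 * q01) * (m1 * n2 - m2 * n1) = 0 := by
    linear_combination (m2) * G0 - (n2) * E0
  have X10 : (-n0 * n0 * q22 + n0 * n2 * q02 + n2 * n0 * q02 - n2 * n2 * q00) * (m0 * n1 - m1 * n0) - (n0 * n0 * q12 - n0 * n2 * q01 - n1 * n0 * q02 + n1 * n2 * q00) * (m2 * n0 - m0 * n2) = 0 := by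
    linear_combination (m0) * G1 - (n0) * E1
  have X11 : (n0 * n0 * q12 - n0 * n2 * q01 - n1 * n0 * q02 + n1 * n2 * q00) * (m1 * n2 - m2 * n1) - (n1 * n0 * q22 - n1 * n2 * q02 - n2 * n0 * q12 + n2 * n2 * q01) * (m0 * n1 - m1 * n0) = 0 := by
    linear_combination (m1) * G1 - (n1) * E1
  have X12 : (n1 * n0 * q22 - n1 * n2 * q02 - n2 * n0 * q12 + n2 * n2 * q01) * (m2 * n0 - m0 * n2) - (-n0 * n0 * q22 + n0 * n2 * q02 + n2 * n0 * q02 - n2 * n2 * q00) * (m1 * n2 - m2 * n1) = 0 := by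
    linear_combination (m2) * G1 - (n2) * E1
  have X20 : (n0 * n0 * q12 - n0 * n1 * q02 - n2 * n0 * q01 + n2 * n1 * q00) * (m0 * n1 - m1 * n0) - (-n0 * n0 * q11 + n0 * n1 * q01 + n1 * n0 * q01 - n1 * n1 * q00) * (m2 * n0 - m0 * n2) = 0 := by
    linear_combination (m0) * G2 - (n0) * E2
  have X21 : (-n0 * n0 * q11 + n0 * n1 * q01 + n1 * n0 * q01 - n1 * n1 * q00) * (m1 * n2 - m2 * n1) - (-n1 * n0 * q12 + n1 * n1 * q02 + n2 * n0 * q11 - n2 * n1 * q01) * (m0 * n1 - m1 * n0) = 0 := by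
    linear_combination (m1) * G2 - (n1) * E2
  have X22 : (-n1 * n0 * q12 + n1 * n1 * q02 + n2 * n0 * q11 - n2 * n1 * q01) * (m2 * n0 - m0 * n2) - (n0 * n0 * q12 - n0 * n1 * q02 - n2 * n0 * q01 + n2 * n1 * q00) * (m1 * n2 - m2 * n1) = 0 := by
    linear_combination (m2) * G2 - (n2) * E2
  have D01 : ((-n1 * n1 * q22 + n1 * n2 * q12 + n2 * n1 * q12 - n2 * n2 * q11) * (-n0 * n0 * q22 + n0 * n2 * q02 + n2 * n0 * q02 - n2 * n2 * q00) - (n0 * n1 * q22 - n0 * n2 * q12 - n2 * n1 * q02 + n2 * n2 * q01) * (n1 * n0 * q22 - n1 * n2 * q02 - n2 * n0 * q12 + n2 * n2 * q01)) * ((m1 * n2 - m2 * n1)^2 + (m2 * n0 - m0 * n2)^2 + (m0 * n1 - m1 * n0)^2) = 0 := by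
    linear_combination (-((m0 * n1 - m1 * n0)) * (n1 * n0 * q22 - n1 * n2 * q02 - n2 * n0 * q12 + n2 * n2 * q01)) * X00 + (-((m0 * n1 - m1 * n0)) * (-n0 * n0 * q22 + n0 * n2 * q02 + n2 * n0 * q02 - n2 * n2 * q00)) * X01 + (-((m0 * n1 - m1 * n0)) * (n0 * n0 * q12 - n0 * n2 * q01 - n1 * n0 * q02 + n1 * n2 * q00) + ((m1 * n2 - m2 * n1) * (n1 * n0 * q22 - n1 * n2 * q02 - n2 * n0 * q12 + n2 * n2 * q01) + (m2 * n0 - m0 * n2) * (-n0 * n0 * q22 + n0 * n2 * q02 + n2 * n0 * q02 - n2 * n2 * q00) + (m0 * n1 - m1 * n0) * (n0 * n0 * q12 - n0 * n2 * q01 - n1 * n0 * q02 + n1 * n2 * q00))) * X02 + (-((m1 * n2 - m2 * n1) * (-n1 * n1 * q22 + n1 * n2 * q12 + n2 * n1 * q12 - n2 * n2 * q11) + (m2 * n0 - m0 * n2) * (n0 * n1 * q22 - n0 * n2 * q12 - n2 * n1 * q02 + n2 * n2 * q01) + (m0 * n1 - m1 * n0) * (-n0 * n1 * q12 + n0 *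 n2 * q11 + n1 * n1 * q02 - n1 * n2 * q01))) * X12
  have D12 : ((-n0 * n0 * q22 + n0 * n2 * q02 + n2 * n0 * q02 - n2 * n2 * q00) * (-n0 * n0 * q11 + n0 * n1 * q01 + n1 * n0 * q01 - n1 * n1 * q00) - (n0 * n0 * q12 - n0 * n2 * q01 - n1 * n0 * q02 + n1 * n2 * q00) * (n0 * n0 * q12 - n0 * n1 * q02 - n2 * n0 * q01 + n2 * n1 * q00)) * ((m1 * n2 - m2 * n1)^2 + (m2 * n0 - m0 * n2)^2 + (m0 * n1 - m1 * n0)^2) = 0 := by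
    linear_combination (-((m1 * n2 - m2 * n1)) * (-n1 * n0 * q12 + n1 * n1 * q02 + n2 * n0 * q11 - n2 * n1 * q01) + ((m1 * n2 - m2 * n1) * (-n1 * n0 * q12 + n1 * n1 * q02 + n2 * n0 * q11 - n2 * n1 * q01) + (m2 * n0 - m0 * n2) * (n0 * n0 * q12 - n0 * n1 * q02 - n2 * n0 * q01 + n2 * n1 * q00) + (m0 * n1 - m1 * n0) * (-n0 * n0 * q11 + n0 * n1 * q01 + n1 * n0 * q01 - n1 * n1 * q00))) * X10 + (-((m1 * n2 - m2 * n1)) * (n0 * n0 * q12 - n0 * n1 * q02 - n2 * n0 * q01 + n2 * n1 * q00)) * X11 + (-((m1 * n2 - m2 * n1)) * (-n0 * n0 * q11 + n0 * n1 * q01 + n1 * n0 * q01 - n1 * n1 * q00)) * X12 + (-((m1 * n2 - m2 * n1) * (n1 * n0 * q22 - n1 * n2 * q02 - n2 * n0 * q12 + n2 * n2 * q01) + (m2 * n0 - m0 * n2) * (-n0 * n0 * q22 + n0 * n2 * q02 + n2 * n0 * q02 - n2 * n2 * q00) + (m0 * n1 - m1 * n0) * (n0 * n0 * q12 - n0 *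 n2 * q01 - n1 * n0 * q02 + n1 * n2 * q00))) * X20
  have D20 : ((-n0 * n0 * q11 + n0 * n1 * q01 + n1 * n0 * q01 - n1 * n1 * q00) * (-n1 * n1 * q22 + n1 * n2 * q12 + n2 * n1 * q12 - n2 * n2 * q11) - (-n1 * n0 * q12 + n1 * n1 * q02 + n2 * n0 * q11 - n2 * n1 * q01) * (-n0 * n1 * q12 + n0 * n2 * q11 + n1 * n1 * q02 - n1 * n2 * q01)) * ((m1 * n2 - m2 * n1)^2 + (m2 * n0 - m0 * n2)^2 + (m0 * n1 - m1 * n0)^2) = 0 := by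
    linear_combination (-((m2 * n0 - m0 * n2)) * (-n1 * n1 * q22 + n1 * n2 * q12 + n2 * n1 * q12 - n2 * n2 * q11)) * X20 + (-((m2 * n0 - m0 * n2)) * (n0 * n1 * q22 - n0 * n2 * q12 - n2 * n1 * q02 + n2 * n2 * q01) + ((m1 * n2 - m2 * n1) * (-n1 * n1 * q22 + n1 * n2 * q12 + n2 * n1 * q12 - n2 * n2 * q11) + (m2 * n0 - m0 * n2) * (n0 * n1 * q22 - n0 * n2 * q12 - n2 * n1 * q02 + n2 * n2 * q01) + (m0 * n1 - m1 * n0) * (-n0 * n1 * q12 + n0 * n2 * q11 + n1 * n1 * q02 - n1 * n2 * q01))) * X21 + (-((m2 * n0 - m0 * n2)) * (-n0 * n1 * q12 + n0 * n2 * q11 + n1 * n1 * q02 - n1 * n2 * q01)) * X22 + (-((m1 * n2 - m2 * n1) * (-n1 * n0 * q12 + n1 * n1 * q02 + n2 * n0 * q11 - n2 * n1 * q01) + (m2 * n0 - m0 * n2) * (n0 * n0 * q12 - n0 * n1 * q02 - n2 * n0 * q01 + n2 * n1 * q00) + (m0 * n1 - m1 * n0) * (-n0 * n0 * q11 + n0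 * n1 * q01 + n1 * n0 * q01 - n1 * n1 * q00))) * X01
  have hUU : ((m1 * n2 - m2 * n1)^2 + (m2 * n0 - m0 * n2)^2 + (m0 * n1 - m1 * n0)^2) = m0^2 + m1^2 + m2^2 := by
    linear_combination (m0^2 + m1^2 + m2^2) * hn - (n0 * m0 + n1 * m1 + n2 * m2) * hmn
  have hU2pos : (0:ℝ) < ((m1 * n2 - m2 * n1)^2 + (m2 * n0 - m0 * n2)^2 + (m0 * n1 - m1 * n0)^2) := by rw [hUU]; exact hmm
  have P01 : ((-n1 * n1 * q22 + n1 * n2 * q12 + n2 * n1 * q12 - n2 * n2 * q11) * (-n0 * n0 * q22 + n0 * n2 * q02 + n2 * n0 * q02 - n2 * n2 * q00) - (n0 * n1 * q22 - n0 * n2 * q12 - n2 * n1 * q02 + n2 * n2 * q01) * (n1 * n0 * q22 - n1 * n2 * q02 - n2 * n0 * q12 + n2 * n2 * q01)) = 0 :=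
    (mul_eq_zero.mp D01).resolve_right (ne_of_gt hU2pos)
  have P12 : ((-n0 * n0 * q22 + n0 * n2 * q02 + n2 * n0 * q02 - n2 * n2 * q00) * (-n0 * n0 * q11 + n0 * n1 * q01 + n1 * n0 * q01 - n1 * n1 * q00) - (n0 * n0 * q12 - n0 * n2 * q01 - n1 * n0 * q02 + n1 * n2 * q00) * (n0 * n0 * q12 - n0 * n1 * q02 - n2 * n0 * q01 + n2 * n1 * q00)) = 0 :=
    (mul_eq_zero.mp D12).resolve_right (ne_of_gt hU2pos)
  have P20 : ((-n0 * n0 * q11 + n0 * n1 * q01 + n1 * n0 * q01 - n1 * n1 * q00) * (-n1 * n1 * q22 + n1 * n2 * q12 + n2 * n1 * q12 - n2 * n2 * q11) - (-n1 * n0 * q12 + n1 * n1 * q02 + n2 * n0 * q11 - n2 * n1 * q01) * (-n0 * n1 * q12 + n0 * n2 * q11 + n1 * n1 * q02 - n1 * n2 * q01)) = 0 :=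
    (mul_eq_zero.mp D20).resolve_right (ne_of_gt hU2pos)
  linear_combination P01 + P12 + P20 - ((q11*q22 - q12^2) * n0^2 + (q00*q22 - q02^2) * n1^2 + (q00*q11 - q01^2) * n2^2 + 2*(q02*q12 - q01*q22) * n0*n1 + 2*(q01*q12 - q02*q11) * n0*n2 + 2*(q01*q02 - q00*q12) * n1*n2) * hn
set_option maxHeartbeats 1000000 in
lemma key (q00 q01 q02 q11 q12 q22 : ℝ)
    (hyp : ∀ n : Fin 3 → ℝ, n 0 ^ 2 + n 1 ^ 2 + n 2 ^ 2 = 1 →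
      ∃ m : Fin 3 → ℝ, (m 0 ≠ 0 ∨ m 1 ≠ 0 ∨ m 2 ≠ 0) ∧
        n 0 * m 0 + n 1 * m 1 + n 2 * m 2 = 0 ∧
        ∀ t : Fin 3, (∑ p : Fin 3, ∑ i : Fin 3, ∑ j : Fin 3, m p * n i * n j *
          (∑ a : Fin 3, ∑ c : Fin 3, lev p i a * lev j t c *
            (![![q00,q01,q02],![q01,q11,q12],![q02,q12,q22]] a c))) = 0) :
    (∀ c : Fin 3 → ℝ, 0 ≤ ∑ a : Fin 3, ∑ e : Fin 3,
        ![![q00,q01,q02],![q01,q11,q12],![q02,q12,q22]] a e * c a * c e) ∨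
    (∀ c : Fin 3 → ℝ, (∑ a : Fin 3, ∑ e : Fin 3,
        ![![q00,q01,q02],![q01,q11,q12],![q02,q12,q22]] a e * c a * c e) ≤ 0) := by
  have hQA : ∀ n0 n1 n2 : ℝ, n0^2 + n1^2 + n2^2 = 1 → ((q11*q22 - q12^2) * n0^2 + (q00*q22 - q02^2) * n1^2 + (q00*q11 - q01^2) * n2^2 + 2*(q02*q12 - q01*q22) * n0*n1 + 2*(q01*q12 - q02*q11) * n0*n2 + 2*(q01*q02 - q00*q12) * n1*n2) = 0 := by
    intro n0 n1 n2 hn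
    obtain ⟨m, hm, hmn0, hEraw⟩ := hyp ![n0, n1, n2] (by norm_num; rw [show ![n0, n1, n2] 2 = n2 from rfl]; linarith)
    have hmn : n0 * m 0 + n1 * m 1 + n2 * m 2 = 0 := by
      norm_num at hmn0; rw [show ![n0, n1, n2] 2 = n2 from rfl] at hmn0; linear_combination hmn0
    have E0 : m 0 * (-n1 * n1 * q22 + n1 * n2 * q12 + n2 * n1 * q12 - n2 * n2 * q11) + m 1 * (n0 * n1 * q22 - n0 * n2 * q12 - n2 * n1 * q02 + n2 * n2 * q01) + m 2 * (-n0 * n1 * q12 + n0 * n2 * q11 + n1 * n1 * q02 - n1 * n2 * q01) = 0 := by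
      have h := hEraw 0
      simp only [Fin.sum_univ_three, lev, Matrix.cons_val_zero, Matrix.cons_val_one,
        Matrix.head_cons, Matrix.cons_val_two, Matrix.tail_cons] at h
      linear_combination h
    have E1 : m 0 * (n1 * n0 * q22 - n1 * n2 * q02 - n2 * n0 * q12 + n2 * n2 * q01) + m 1 * (-n0 * n0 * q22 + n0 * n2 * q02 + n2 * n0 * q02 - n2 * n2 * q00) + m 2 * (n0 * n0 * q12 - n0 * n2 * q01 - n1 * n0 * q02 + n1 * n2 * q00) = 0 := by
      have h := hEraw 1
      simp only [Fin.sum_univ_three, lev, Matrix.cons_val_zero, Matrix.cons_val_one,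
        Matrix.head_cons, Matrix.cons_val_two, Matrix.tail_cons] at h
      linear_combination h
    have E2 : m 0 * (-n1 * n0 * q12 + n1 * n1 * q02 + n2 * n0 * q11 - n2 * n1 * q01) + m 1 * (n0 * n0 * q12 - n0 * n1 * q02 - n2 * n0 * q01 + n2 * n1 * q00) + m 2 * (-n0 * n0 * q11 + n0 * n1 * q01 + n1 * n0 * q01 - n1 * n1 * q00) = 0 := by
      have h := hEraw 2
      simp only [Fin.sum_univ_three, lev, Matrix.cons_val_zero, Matrix.cons_val_one,
        Matrix.head_cons, Matrix.cons_val_two, Matrix.tail_cons] at h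
      linear_combination h
    exact stepA q00 q01 q02 q11 q12 q22 (m 0) (m 1) (m 2) n0 n1 n2 hn hm hmn E0 E1 E2
  have hd0 : q11*q22 - q12^2 = 0 := by linear_combination hQA 1 0 0 (by norm_num)
  have hd1 : q00*q22 - q02^2 = 0 := by linear_combination hQA 0 1 0 (by norm_num)
  have hd2 : q00*q11 - q01^2 = 0 := by linear_combination hQA 0 0 1 (by norm_num)
  have ho01 : q02*q12 - q01*q22 = 0 := by
    linear_combination (25/24) * hQA (3/5) (4/5) 0 (by norm_num) - (3/8) * hd0 - (2/3) * hd1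
  have ho02 : q01*q12 - q02*q11 = 0 := by
    linear_combination (25/24) * hQA (3/5) 0 (4/5) (by norm_num) - (3/8) * hd0 - (2/3) * hd2
  have ho12 : q01*q02 - q00*q12 = 0 := by
    linear_combination (25/24) * hQA 0 (3/5) (4/5) (by norm_num) - (3/8) * hd1 - (2/3) * hd2
  rcases eq_or_ne q00 0 with h00 | h00
  · rcases eq_or_ne q11 0 with h11 | h11
    · rcases eq_or_ne q22 0 with h22 | h22
      · left
        intro c
        have e01 : q01 = 0 := pow_eq_zero_iff two_ne_zero |>.mp (by linear_combination -hd2 + q11 * h00)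
        have e02 : q02 = 0 := pow_eq_zero_iff two_ne_zero |>.mp (by linear_combination -hd1 + q22 * h00)
        have e12 : q12 = 0 := pow_eq_zero_iff two_ne_zero |>.mp (by linear_combination -hd0 + q22 * h11)
        have hv : (∑ a : Fin 3, ∑ e : Fin 3, ![![q00,q01,q02],![q01,q11,q12],![q02,q12,q22]] a e * c a * c e) = (0:ℝ) := by
          simp only [Fin.sum_univ_three, Matrix.cons_val_zero, Matrix.cons_val_one, Matrix.head_cons, Matrix.cons_val_two, Matrix.tail_cons]
          linear_combination (c 0)^2 * h00 + (c 1)^2 * h11 + (c 2)^2 * h22 + (2*(c 0)*(c 1)) * e01 + (2*(c 0)*(c 2)) * e02 + (2*(c 1)*(c 2)) * e12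
        rw [hv]
      rcases lt_or_gt_of_ne h22 with hneg | hpos
      · right
        intro c
        have hsq : q22 * (q00*(c 0)^2 + q11*(c 1)^2 + q22*(c 2)^2 + 2*q01*(c 0)*(c 1) + 2*q02*(c 0)*(c 2) + 2*q12*(c 1)*(c 2)) = (q02*(c 0) + q12*(c 1) + q22*(c 2))^2 := by
          linear_combination (c 0)^2 * hd1 + (c 1)^2 * hd0 - 2*(c 0)*(c 1) * ho01
        simp only [Fin.sum_univ_three, Matrix.cons_val_zero, Matrix.cons_val_one, Matrix.head_cons, Matrix.cons_val_two, Matrix.tail_cons]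
        nlinarith [hsq, sq_nonneg (q02*(c 0) + q12*(c 1) + q22*(c 2)), hneg]
      · left
        intro c
        have hsq : q22 * (q00*(c 0)^2 + q11*(c 1)^2 + q22*(c 2)^2 + 2*q01*(c 0)*(c 1) + 2*q02*(c 0)*(c 2) + 2*q12*(c 1)*(c 2)) = (q02*(c 0) + q12*(c 1) + q22*(c 2))^2 := by
          linear_combination (c 0)^2 * hd1 + (c 1)^2 * hd0 - 2*(c 0)*(c 1) * ho01
        simp only [Fin.sum_univ_three, Matrix.cons_val_zero, Matrix.cons_val_one, Matrix.head_cons, Matrix.cons_val_two, Matrix.tail_cons]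
        nlinarith [hsq, sq_nonneg (q02*(c 0) + q12*(c 1) + q22*(c 2)), hpos]
    rcases lt_or_gt_of_ne h11 with hneg | hpos
    · right
      intro c
      have hsq : q11 * (q00*(c 0)^2 + q11*(c 1)^2 + q22*(c 2)^2 + 2*q01*(c 0)*(c 1) + 2*q02*(c 0)*(c 2) + 2*q12*(c 1)*(c 2)) = (q01*(c 0) + q11*(c 1) + q12*(c 2))^2 := by
        linear_combination (c 0)^2 * hd2 + (c 2)^2 * hd0 - 2*(c 0)*(c 2) * ho02
      simp only [Fin.sum_univ_three, Matrix.cons_val_zero, Matrix.cons_val_one, Matrix.head_cons, Matrix.cons_val_two, Matrix.tail_cons]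
      nlinarith [hsq, sq_nonneg (q01*(c 0) + q11*(c 1) + q12*(c 2)), hneg]
    · left
      intro c
      have hsq : q11 * (q00*(c 0)^2 + q11*(c 1)^2 + q22*(c 2)^2 + 2*q01*(c 0)*(c 1) + 2*q02*(c 0)*(c 2) + 2*q12*(c 1)*(c 2)) = (q01*(c 0) + q11*(c 1) + q12*(c 2))^2 := by
        linear_combination (c 0)^2 * hd2 + (c 2)^2 * hd0 - 2*(c 0)*(c 2) * ho02
      simp only [Fin.sum_univ_three, Matrix.cons_val_zero, Matrix.cons_val_one, Matrix.head_cons, Matrix.cons_val_two, Matrix.tail_cons]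
      nlinarith [hsq, sq_nonneg (q01*(c 0) + q11*(c 1) + q12*(c 2)), hpos]
  rcases lt_or_gt_of_ne h00 with hneg | hpos
  · right
    intro c
    have hsq : q00 * (q00*(c 0)^2 + q11*(c 1)^2 + q22*(c 2)^2 + 2*q01*(c 0)*(c 1) + 2*q02*(c 0)*(c 2) + 2*q12*(c 1)*(c 2)) = (q00*(c 0) + q01*(c 1) + q02*(c 2))^2 := by
      linear_combination (c 1)^2 * hd2 + (c 2)^2 * hd1 - 2*(c 1)*(c 2) * ho12
    simp only [Fin.sum_univ_three, Matrix.cons_val_zero, Matrix.cons_val_one, Matrix.head_cons, Matrix.cons_val_two, Matrix.tail_cons]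
    nlinarith [hsq, sq_nonneg (q00*(c 0) + q01*(c 1) + q02*(c 2)), hneg]
  · left
    intro c
    have hsq : q00 * (q00*(c 0)^2 + q11*(c 1)^2 + q22*(c 2)^2 + 2*q01*(c 0)*(c 1) + 2*q02*(c 0)*(c 2) + 2*q12*(c 1)*(c 2)) = (q00*(c 0) + q01*(c 1) + q02*(c 2))^2 := by
      linear_combination (c 1)^2 * hd2 + (c 2)^2 * hd1 - 2*(c 1)*(c 2) * ho12
    simp only [Fin.sum_univ_three, Matrix.cons_val_zero, Matrix.cons_val_one, Matrix.head_cons, Matrix.cons_val_two, Matrix.tail_cons]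
    nlinarith [hsq, sq_nonneg (q00*(c 0) + q01*(c 1) + q02*(c 2)), hpos]

set_option maxHeartbeats 4000000 in
/-- If every unit vector `v` of a `3`-dimensional inner product space admits a nonzero
vector `w ⟂ v` with `R(w,v)v = 0` (i.e., `w ∈ ker J_v`, expressed by the vanishing of all
inner products `⟨R(w,v)v, u⟩ = R w v v u`), then `R` has signed sectional curvatures:
either all sectional curvatures are `≥ 0`, or all are `≤ 0`. -/
theorem signed_sec_of_jacobi_kernels {E : Type*} [NormedAddCommGroup E]
    [InnerProductSpace ℝ E] [FiniteDimensional ℝ E] (hdim : Module.finrank ℝ E = 3)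
    (T : AlgCurvTensor E)
    (hker : ∀ v : E, ‖v‖ = 1 → ∃ w : E, w ≠ 0 ∧ ⟪v, w⟫ = 0 ∧ ∀ u : E, T.R w v v u = 0) :
    (∀ x y : E, ‖x‖ = 1 → ‖y‖ = 1 → ⟪x, y⟫ = 0 → 0 ≤ T.R x y y x) ∨
    (∀ x y : E, ‖x‖ = 1 → ‖y‖ = 1 → ⟪x, y⟫ = 0 → T.R x y y x ≤ 0) := by
  classical
  let b : OrthonormalBasis (Fin 3) ℝ E := (stdOrthonormalBasis ℝ E).reindex (finCongr hdim)
  have hA : ∀ i j k l : Fin 3, T.R (b i) (b j) (b k) (b l) = - T.R (b j) (b i) (b k) (b l) :=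
    fun i j k l => T.antisym_fst _ _ _ _
  have hB : ∀ i j k l : Fin 3, T.R (b i) (b j) (b k) (b l) = - T.R (b i) (b j) (b l) (b k) :=
    fun i j k l => T.antisym_snd _ _ _ _
  have hmast : ∀ i j k l : Fin 3, T.R (b i) (b j) (b k) (b l) =
      ∑ a : Fin 3, ∑ c : Fin 3, lev i j a * lev k l c *
        T.R (b (a+1)) (b (a+2)) (b (c+1)) (b (c+2)) :=
    fun i j k l => master (fun i j k l => T.R (b i) (b j) (b k) (b l)) hA hB i j k l
  set Qm : Fin 3 → Fin 3 → ℝ :=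
    ![![T.R (b 1) (b 2) (b 1) (b 2), T.R (b 1) (b 2) (b 2) (b 0), T.R (b 1) (b 2) (b 0) (b 1)],
      ![T.R (b 1) (b 2) (b 2) (b 0), T.R (b 2) (b 0) (b 2) (b 0), T.R (b 2) (b 0) (b 0) (b 1)],
      ![T.R (b 1) (b 2) (b 0) (b 1), T.R (b 2) (b 0) (b 0) (b 1), T.R (b 0) (b 1) (b 0) (b 1)]]
    with hQmdef
  have hQ : ∀ a c : Fin 3,
      T.R (b (a+1)) (b (a+2)) (b (c+1)) (b (c+2)) = Qm a c := by
    intro a c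
    rcases fin3cases a with rfl|rfl|rfl <;> rcases fin3cases c with rfl|rfl|rfl <;>
      simp only [hQmdef, Fin.reduceAdd, Matrix.cons_val_zero, Matrix.cons_val_one,
        Matrix.head_cons, Matrix.cons_val_two, Matrix.tail_cons] <;>
      first
        | rfl
        | exact T.pair_symm _ _ _ _
  have hs10 : Qm 1 0 = Qm 0 1 := rfl
  have hs20 : Qm 2 0 = Qm 0 2 := rfl
  have hs21 : Qm 2 1 = Qm 1 2 := rfl
  have hr' : ∀ i j k l : Fin 3, T.R (b i) (b j) (b k) (b l) =
      ∑ a : Fin 3, ∑ c : Fin 3, lev i j a * lev k l c * Qm a c := by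
    intro i j k l
    rw [hmast i j k l]
    exact Finset.sum_congr rfl fun a _ => Finset.sum_congr rfl fun c _ => by rw [hQ a c]
  have hkey := key (Qm 0 0) (Qm 0 1) (Qm 0 2) (Qm 1 1) (Qm 1 2) (Qm 2 2) ?_
  · -- sectional curvature formula
    have hsec : ∀ x y : E, T.R x y y x =
        - ∑ a : Fin 3, ∑ e : Fin 3,
            ![![Qm 0 0, Qm 0 1, Qm 0 2],![Qm 0 1, Qm 1 1, Qm 1 2],![Qm 0 2, Qm 1 2, Qm 2 2]] a e *
            (fun a => b.repr x (a+1) * b.repr y (a+2) - b.repr x (a+2) * b.repr y (a+1)) a *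
            (fun a => b.repr x (a+1) * b.repr y (a+2) - b.repr x (a+2) * b.repr y (a+1)) e := by
      intro x y
      rw [expand4 T b x y y x]
      simp only [hr']
      simp only [Fin.sum_univ_three, lev, Fin.reduceAdd, Matrix.cons_val_zero,
        Matrix.cons_val_one, Matrix.head_cons, Matrix.cons_val_two, Matrix.tail_cons,
        zero_mul, mul_zero, one_mul, neg_mul, mul_neg, neg_neg, add_zero, zero_add]
      simp only [hs10, hs20, hs21]
      ring
    rcases hkey with H | H
    · right
      intro x y _ _ _
      rw [hsec x y]
      have := H (fun a => b.repr x (a+1) * b.repr y (a+2) - b.repr x (a+2) * b.repr y (a+1))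
      linarith
    · left
      intro x y _ _ _
      rw [hsec x y]
      have := H (fun a => b.repr x (a+1) * b.repr y (a+2) - b.repr x (a+2) * b.repr y (a+1))
      linarith
  · -- the kernel hypothesis, in coordinates
    intro n hn
    set v : E := b.repr.symm ((WithLp.equiv 2 (Fin 3 → ℝ)).symm n) with hvdef
    have hnv : ∀ i, b.repr v i = n i := by
      intro i; rw [hvdef]; simp [WithLp.equiv]
    have hvnorm : ‖v‖ = 1 := by
      rw [hvdef, LinearIsometryEquiv.norm_map, EuclideanSpace.norm_eq]
      simpa [Fin.sum_univ_three] using hn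
    obtain ⟨w, hw0, hvw, hu⟩ := hker v hvnorm
    refine ⟨fun i => b.repr w i, ?_, ?_, ?_⟩
    · by_contra hcon
      push_neg at hcon
      obtain ⟨h0, h1, h2⟩ := hcon
      apply hw0
      have hz : b.repr w = 0 := by
        ext i
        rcases fin3cases i with rfl|rfl|rfl
        · simpa using h0
        · simpa using h1
        · simpa using h2
      simpa using (b.repr.map_eq_zero_iff).mp hz
    · have h2 : (∑ i : Fin 3, b.repr v i * b.repr w i) = 0 := (innerSum b v w).symm.trans hvw
      simp only [Fin.sum_univ_three, hnv] at h2
      linear_combination h2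
    · intro t
      rcases fin3cases t with rfl|rfl|rfl <;>
      [(have h := hu (b 0); rw [expand4 T b w v v (b 0)] at h);
       (have h := hu (b 1); rw [expand4 T b w v v (b 1)] at h);
       (have h := hu (b 2); rw [expand4 T b w v v (b 2)] at h)] <;>
      (simp only [OrthonormalBasis.repr_self, EuclideanSpace.single_apply, ite_mul, one_mul,
        zero_mul, Finset.sum_ite_eq', Finset.mem_univ, if_true] at h;
       simp only [hr', hnv] at h;
       simp only [Fin.sum_univ_three, lev, Matrix.cons_val_zero, Matrix.cons_val_one,
        Matrix.head_cons, Matrix.cons_val_two, Matrix.tail_cons,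
        zero_mul, mul_zero, one_mul, neg_mul, mul_neg, neg_neg, add_zero, zero_add] at h ⊢;
       simp only [hs10, hs20, hs21] at h ⊢;
       linear_combination h)
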